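/- Let n > 3 be odd and let k be an even integer with 0 ≤ k ≤ (n−1)/2. For every p ∈ [0,1] and all ω⁰, ω¹ ∈ Ω_n, write x for the first coordinate of pω⁰ + (1−p)ω¹ and set S₀ = p⟨Q₀⁰, ω⁰⟩ + (1−p)⟨Q₀¹, ω¹⟩. Then R_n² r_n (r_n² − 1)(1 − cos(kθ_n)) x − 2R_n² r_n² cos(kθ_n) + 2R_n² r_n² ≤ S₀ ≤ R_n² r_n (r_n² − 1)(cos(kθ_n) − 1) x + 2R_n² r_n² cos(kθ_n) + R_n²(1 + r_n⁴). Moreover, the upper (respectively lower) bound is attained whenever the first coordinates of ω⁰ and ω¹ equal r_n and −1/r_n (respectively −1/r_n and r_n). -/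

import Mathlib

noncomputable section

/-- Standard inner product on `ℝ³`. -/
def dot3 (v w : Fin 3 → ℝ) : ℝ := ∑ i, v i * w i

/-- The angle `θ_n = π / n`. -/
def thetaN (n : ℕ) : ℝ := Real.pi / n

/-- `r_n = (cos θ_n)^{-1/2}`. -/
def rN (n : ℕ) : ℝ := Real.sqrt (Real.cos (thetaN n))⁻¹

/-- `R_n = 1 / (1 + r_n²)`. -/
def RN (n : ℕ) : ℝ := 1 / (1 + rN n ^ 2)

/-- The pure states `ω_n(i)` of the regular polygon theory. -/
def omegaN (n i : ℕ) : Fin 3 → ℝ :=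
  ![rN n * Real.cos (2 * (i : ℝ) * thetaN n), rN n * Real.sin (2 * (i : ℝ) * thetaN n), 1]

/-- The state space `Ω_n`, the convex hull of the pure states. -/
def OmegaN (n : ℕ) : Set (Fin 3 → ℝ) :=
  convexHull ℝ {v | ∃ i < n, v = omegaN n i}

/-- The unit effect `u = (0,0,1)`. -/
def uEff : Fin 3 → ℝ := ![0, 0, 1]

/-- The pure effects `e_n(i)` (separate formulas for even and odd `n`). -/
def eN (n i : ℕ) : Fin 3 → ℝ :=
  if Even n then
    (1 / 2 : ℝ) • ![rN n * Real.cos ((2 * (i : ℝ) + 1) * thetaN n),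
                    rN n * Real.sin ((2 * (i : ℝ) + 1) * thetaN n), 1]
  else
    RN n • ![rN n * Real.cos (2 * (i : ℝ) * thetaN n),
             rN n * Real.sin (2 * (i : ℝ) * thetaN n), 1]

/-- The complementary effect `ē_n(i) = u - e_n(i)`. -/
def eBarN (n i : ℕ) : Fin 3 → ℝ := uEff - eN n i

/-- The effect space `E_n`. -/
def EffN (n : ℕ) : Set (Fin 3 → ℝ) :=
  {f | ∀ ω ∈ OmegaN n, dot3 f ω ∈ Set.Icc (0 : ℝ) 1}

/-- The positive cone `V_{n+}` generated by the state space. -/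
def VposN (n : ℕ) : Set (Fin 3 → ℝ) :=
  {x | ∃ c : ℝ, 0 ≤ c ∧ ∃ ω ∈ OmegaN n, x = c • ω}

/-- The dual cone `V*_{n+}` generated by the effect space. -/
def VdualN (n : ℕ) : Set (Fin 3 → ℝ) :=
  {x | ∃ c : ℝ, 0 ≤ c ∧ ∃ f ∈ EffN n, x = c • f}

/-- A state of `Ω_n ⊗_max Ω_n`, identified with a normalized cone-preserving linear map. -/
def IsState (n : ℕ) (η : (Fin 3 → ℝ) →ₗ[ℝ] (Fin 3 → ℝ)) : Prop :=
  (∀ x ∈ VdualN n, η x ∈ VposN n) ∧ dot3 uEff (η uEff) = 1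

/-- A binary observable on `Ω_n`: a pair of effects summing to the unit effect. -/
def IsObservable (n : ℕ) (A : (Fin 3 → ℝ) × (Fin 3 → ℝ)) : Prop :=
  A.1 ∈ EffN n ∧ A.2 ∈ EffN n ∧ A.1 + A.2 = uEff

/-- The observable `E_n(i) = (e_n(i), ē_n(i))`. -/
def EObs (n i : ℕ) : (Fin 3 → ℝ) × (Fin 3 → ℝ) := (eN n i, eBarN n i)

/-- The correlator `E(st) = Σ_{a,b} (-1)^{a+b} ⟨B^b, η(A^a)⟩`. -/
def corr (η : (Fin 3 → ℝ) →ₗ[ℝ] (Fin 3 → ℝ)) (A B : (Fin 3 → ℝ) × (Fin 3 → ℝ)) : ℝ :=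
  dot3 B.1 (η A.1) - dot3 B.2 (η A.1) - dot3 B.1 (η A.2) + dot3 B.2 (η A.2)

/-- The CHSH value `C[η; A₀,A₁; B₀,B₁] = E(00) + E(01) + E(10) - E(11)`. -/
def CHSH (η : (Fin 3 → ℝ) →ₗ[ℝ] (Fin 3 → ℝ))
    (A0 A1 B0 B1 : (Fin 3 → ℝ) × (Fin 3 → ℝ)) : ℝ :=
  corr η A0 B0 + corr η A0 B1 + corr η A1 B0 - corr η A1 B1

/-- `GL(Ω_n)`: linear bijections of `ℝ³` preserving the state space. -/
def GLOmega (n : ℕ) : Set ((Fin 3 → ℝ) →ₗ[ℝ] (Fin 3 → ℝ)) :=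
  {T | Function.Bijective T ∧ T '' OmegaN n = OmegaN n}

/-- The order isomorphism `T_n`: a rotation by `θ_n` for even `n`, the identity for odd `n`. -/
def TN (n : ℕ) : (Fin 3 → ℝ) →ₗ[ℝ] (Fin 3 → ℝ) :=
  if Even n then
    Matrix.toLin' !![Real.cos (thetaN n), Real.sin (thetaN n), 0;
                     -Real.sin (thetaN n), Real.cos (thetaN n), 0;
                     0, 0, 1]
  else LinearMap.id

/-- Maximally entangled states: elements of `T_n · GL(Ω_n)`. -/
def MaxEnt (n : ℕ) (η : (Fin 3 → ℝ) →ₗ[ℝ] (Fin 3 → ℝ)) : Prop :=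
  ∃ T ∈ GLOmega n, η = (TN n).comp T

/-- The effect `Q₀⁰ = (R_n r_n cos(kθ_n), 0, R_n)` (rotated coordinates). -/
def Q00 (n k : ℕ) : Fin 3 → ℝ :=
  ![RN n * rN n * Real.cos ((k : ℝ) * thetaN n), 0, RN n]

/-- The effect `Q₀¹ = (−R_n r_n cos(kθ_n), 0, 1 − R_n)` (rotated coordinates). -/
def Q01 (n k : ℕ) : Fin 3 → ℝ :=
  ![-(RN n * rN n * Real.cos ((k : ℝ) * thetaN n)), 0, 1 - RN n]

/-- Scalar core of the bounds: pure algebra with `R = 1/(1+r²)`. -/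
lemma S0_scalar_core (r c p a b R : ℝ) (hRd : R = 1 / (1 + r ^ 2)) (hr : 1 ≤ r) (hc0 : 0 ≤ c)
    (hkey : r ^ 2 - 1 ≤ 2 * r ^ 2 * c)
    (hp0 : 0 ≤ p) (hp1 : p ≤ 1)
    (ha1 : a ≤ r) (ha2 : -1 ≤ a * r) (hb1 : b ≤ r) (hb2 : -1 ≤ b * r) :
    (R ^ 2 * r * (r ^ 2 - 1) * (1 - c) * (p * a + (1 - p) * b)
        - 2 * R ^ 2 * r ^ 2 * c + 2 * R ^ 2 * r ^ 2
      ≤ p * (R * r * c * a + R) + (1 - p) * (-(R * r * c) * b + (1 - R))) ∧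
    (p * (R * r * c * a + R) + (1 - p) * (-(R * r * c) * b + (1 - R))
      ≤ R ^ 2 * r * (r ^ 2 - 1) * (c - 1) * (p * a + (1 - p) * b)
        + 2 * R ^ 2 * r ^ 2 * c + R ^ 2 * (1 + r ^ 4)) ∧
    (a = r ∧ b = -(1 / r) →
      p * (R * r * c * a + R) + (1 - p) * (-(R * r * c) * b + (1 - R))
        = R ^ 2 * r * (r ^ 2 - 1) * (c - 1) * (p * a + (1 - p) * b)
          + 2 * R ^ 2 * r ^ 2 * c + R ^ 2 * (1 + r ^ 4)) ∧
    (a = -(1 / r) ∧ b = r →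
      p * (R * r * c * a + R) + (1 - p) * (-(R * r * c) * b + (1 - R))
        = R ^ 2 * r * (r ^ 2 - 1) * (1 - c) * (p * a + (1 - p) * b)
          - 2 * R ^ 2 * r ^ 2 * c + 2 * R ^ 2 * r ^ 2) := by
  have hr0 : (0 : ℝ) < r := lt_of_lt_of_le one_pos hr
  have h1 : (0 : ℝ) < 1 + r ^ 2 := by positivity
  have h2 : (0 : ℝ) < (1 + r ^ 2) ^ 2 := by positivity
  have hR := hRd
  set S := p * (R * r * c * a + R) + (1 - p) * (-(R * r * c) * b + (1 - R)) with hS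
  set x := p * a + (1 - p) * b with hx
  have hub : (R ^ 2 * r * (r ^ 2 - 1) * (c - 1) * x + 2 * R ^ 2 * r ^ 2 * c
        + R ^ 2 * (1 + r ^ 4) - S) * (1 + r ^ 2) ^ 2
      = r * (2 * c + r ^ 2 - 1) * (p * (r - a))
        + (2 * r ^ 2 * c - r ^ 2 + 1) * ((1 - p) * (b * r + 1)) := by
    rw [hS, hx, hR]; field_simp; ring
  have hlb : (S - (R ^ 2 * r * (r ^ 2 - 1) * (1 - c) * x - 2 * R ^ 2 * r ^ 2 * c
        + 2 * R ^ 2 * r ^ 2)) * (1 + r ^ 2) ^ 2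
      = (2 * r ^ 2 * c - r ^ 2 + 1) * (p * (a * r + 1))
        + r * (2 * c + r ^ 2 - 1) * ((1 - p) * (r - b)) := by
    rw [hS, hx, hR]; field_simp; ring
  have hA : 0 ≤ 2 * c + r ^ 2 - 1 := by nlinarith
  have hB : 0 ≤ 2 * r ^ 2 * c - r ^ 2 + 1 := by linarith
  have hubn : 0 ≤ r * (2 * c + r ^ 2 - 1) * (p * (r - a))
      + (2 * r ^ 2 * c - r ^ 2 + 1) * ((1 - p) * (b * r + 1)) := by
    have t1 : 0 ≤ r * (2 * c + r ^ 2 - 1) * (p * (r - a)) :=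
      mul_nonneg (mul_nonneg hr0.le hA) (mul_nonneg hp0 (by linarith))
    have t2 : 0 ≤ (2 * r ^ 2 * c - r ^ 2 + 1) * ((1 - p) * (b * r + 1)) :=
      mul_nonneg hB (mul_nonneg (by linarith) (by linarith))
    linarith
  have hlbn : 0 ≤ (2 * r ^ 2 * c - r ^ 2 + 1) * (p * (a * r + 1))
      + r * (2 * c + r ^ 2 - 1) * ((1 - p) * (r - b)) := by
    have t1 : 0 ≤ (2 * r ^ 2 * c - r ^ 2 + 1) * (p * (a * r + 1)) :=
      mul_nonneg hB (mul_nonneg hp0 (by linarith))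
    have t2 : 0 ≤ r * (2 * c + r ^ 2 - 1) * ((1 - p) * (r - b)) :=
      mul_nonneg (mul_nonneg hr0.le hA) (mul_nonneg (by linarith) (by linarith))
    linarith
  refine ⟨?_, ?_, ?_, ?_⟩
  · have := (mul_nonneg_iff_of_pos_right h2).mp (hlb ▸ hlbn)
    linarith
  · have := (mul_nonneg_iff_of_pos_right h2).mp (hub ▸ hubn)
    linarith
  · rintro ⟨ha, hb⟩
    have hrr : -(1 / r) * r + 1 = 0 := by field_simp; norm_num
    have h0 : (R ^ 2 * r * (r ^ 2 - 1) * (c - 1) * x + 2 * R ^ 2 * r ^ 2 * c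
        + R ^ 2 * (1 + r ^ 4) - S) * (1 + r ^ 2) ^ 2 = 0 := by
      rw [hub, ha, hb, hrr]; ring
    have := (mul_eq_zero.mp h0).resolve_right h2.ne'
    linarith
  · rintro ⟨ha, hb⟩
    have hrr : -(1 / r) * r + 1 = 0 := by field_simp; norm_num
    have h0 : (S - (R ^ 2 * r * (r ^ 2 - 1) * (1 - c) * x - 2 * R ^ 2 * r ^ 2 * c
        + 2 * R ^ 2 * r ^ 2)) * (1 + r ^ 2) ^ 2 = 0 := by
      rw [hlb, ha, hb, hrr]; ring
    have := (mul_eq_zero.mp h0).resolve_right h2.ne'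
    linarith

/-- Every state of `Ω_n` (n odd, n > 3) has third coordinate `1` and first coordinate
in `[-1/r_n, r_n]`. -/
lemma omega_coord_bounds (n : ℕ) (hodd : Odd n) (hn : 3 < n)
    {w : Fin 3 → ℝ} (hw : w ∈ OmegaN n) :
    w 2 = 1 ∧ -1 ≤ w 0 * rN n ∧ w 0 ≤ rN n := by
  have hn0 : (0 : ℝ) < n := by positivity
  have hθpos : 0 < thetaN n := by
    unfold thetaN; positivity
  have hθn : thetaN n * n = Real.pi := by
    unfold thetaN; field_simp
  have hθlt : thetaN n < Real.pi / 2 := by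
    unfold thetaN
    rw [div_lt_div_iff₀ hn0 two_pos]
    nlinarith [Real.pi_pos,
      mul_lt_mul_of_pos_left (by exact_mod_cast hn : (3 : ℝ) < n) Real.pi_pos]
  have hcosθ : 0 < Real.cos (thetaN n) :=
    Real.cos_pos_of_mem_Ioo ⟨by linarith [Real.pi_pos], hθlt⟩
  have hr0 : 0 ≤ rN n := Real.sqrt_nonneg _
  have hr2 : rN n ^ 2 = (Real.cos (thetaN n))⁻¹ :=
    Real.sq_sqrt (inv_nonneg.mpr hcosθ.le)
  have hr2cos : rN n ^ 2 * Real.cos (thetaN n) = 1 := by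
    rw [hr2]; field_simp
  set C : Set (Fin 3 → ℝ) := {v | v 2 = 1 ∧ -1 ≤ v 0 * rN n ∧ v 0 ≤ rN n} with hC
  have hconv : Convex ℝ C := by
    rintro v hv u hu s t hs ht hst
    refine ⟨?_, ?_, ?_⟩
    · simp only [Pi.add_apply, Pi.smul_apply, smul_eq_mul]
      have := hv.1; have := hu.1
      nlinarith
    · simp only [Pi.add_apply, Pi.smul_apply, smul_eq_mul]
      have h1 : s * (-1) ≤ s * (v 0 * rN n) := mul_le_mul_of_nonneg_left hv.2.1 hs
      have h2 : t * (-1) ≤ t * (u 0 * rN n) := mul_le_mul_of_nonneg_left hu.2.1 ht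
      nlinarith
    · simp only [Pi.add_apply, Pi.smul_apply, smul_eq_mul]
      have h1 : s * v 0 ≤ s * rN n := mul_le_mul_of_nonneg_left hv.2.2 hs
      have h2 : t * u 0 ≤ t * rN n := mul_le_mul_of_nonneg_left hu.2.2 ht
      nlinarith
  have hgen : {v | ∃ i < n, v = omegaN n i} ⊆ C := by
    rintro v ⟨i, hi, rfl⟩
    have hcos_le : Real.cos (2 * (i : ℝ) * thetaN n) ≤ 1 := Real.cos_le_one _
    -- lower bound : cos(2iθ) ≥ -cos θ
    have hmid : 2 * i ≠ n := by
      obtain ⟨m, rfl⟩ := hodd; omega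
    have hlow : -Real.cos (thetaN n) ≤ Real.cos (2 * (i : ℝ) * thetaN n) := by
      rcases lt_or_gt_of_ne hmid with hcase | hcase
      · -- 2i ≤ n - 1, so 2iθ ≤ π - θ
        have hle : (2 * (i : ℝ)) ≤ (n : ℝ) - 1 := by
          have : 2 * i + 1 ≤ n := by omega
          have := (by exact_mod_cast this : (2 * (i : ℝ)) + 1 ≤ (n : ℝ))
          linarith
        have hxle : 2 * (i : ℝ) * thetaN n ≤ Real.pi - thetaN n := by
          nlinarith [mul_le_mul_of_nonneg_right hle hθpos.le]
        have := Real.cos_le_cos_of_nonneg_of_le_pi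
          (by positivity) (by linarith) hxle
        rwa [Real.cos_pi_sub] at this
      · -- 2i ≥ n + 1 : use cos(2π - 2iθ)
        have hge : (n : ℝ) + 1 ≤ 2 * (i : ℝ) := by
          have : n + 1 ≤ 2 * i := by omega
          exact_mod_cast this
        have hle : (2 * (i : ℝ)) ≤ 2 * (n : ℝ) - 2 := by
          have h' : 2 * i + 2 ≤ 2 * n := by omega
          have := (by exact_mod_cast h' : (2 * (i : ℝ)) + 2 ≤ 2 * (n : ℝ))
          linarith
        have h0le : 0 ≤ 2 * Real.pi - 2 * (i : ℝ) * thetaN n := by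
          nlinarith [mul_le_mul_of_nonneg_right hle hθpos.le]
        have hxle : 2 * Real.pi - 2 * (i : ℝ) * thetaN n ≤ Real.pi - thetaN n := by
          nlinarith [mul_le_mul_of_nonneg_right hge hθpos.le]
        have := Real.cos_le_cos_of_nonneg_of_le_pi h0le (by linarith) hxle
        rw [Real.cos_pi_sub, Real.cos_two_pi_sub] at this
        exact this
    refine ⟨by simp [omegaN], ?_, ?_⟩
    · have : rN n * Real.cos (2 * (i : ℝ) * thetaN n) * rN n
          = rN n ^ 2 * Real.cos (2 * (i : ℝ) * thetaN n) := by ring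
      simp only [omegaN, Matrix.cons_val_zero]
      rw [this]
      nlinarith [mul_le_mul_of_nonneg_left hlow (by positivity : (0:ℝ) ≤ rN n ^ 2)]
    · simp only [omegaN, Matrix.cons_val_zero]
      nlinarith [mul_le_mul_of_nonneg_left hcos_le hr0]
  exact convexHull_min hgen hconv hw

/-- Key numeric facts about `r_n` and `cos(kθ_n)`. -/
lemma polygon_facts (n k : ℕ) (hn : 3 < n) (hk : k ≤ (n - 1) / 2) :
    1 ≤ rN n ∧ 0 < Real.cos ((k : ℝ) * thetaN n) ∧
      rN n ^ 2 - 1 ≤ 2 * rN n ^ 2 * Real.cos ((k : ℝ) * thetaN n) := by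
  have hn0 : (0 : ℝ) < n := by positivity
  have hθpos : 0 < thetaN n := by unfold thetaN; positivity
  have hθn : thetaN n * n = Real.pi := by unfold thetaN; field_simp
  have hθlt : thetaN n < Real.pi / 2 := by
    unfold thetaN
    rw [div_lt_div_iff₀ hn0 two_pos]
    nlinarith [Real.pi_pos,
      mul_lt_mul_of_pos_left (by exact_mod_cast hn : (3 : ℝ) < n) Real.pi_pos]
  have hcosθ : 0 < Real.cos (thetaN n) :=
    Real.cos_pos_of_mem_Ioo ⟨by linarith [Real.pi_pos], hθlt⟩
  have hr0 : 0 ≤ rN n := Real.sqrt_nonneg _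
  have hr2 : rN n ^ 2 = (Real.cos (thetaN n))⁻¹ :=
    Real.sq_sqrt (inv_nonneg.mpr hcosθ.le)
  have hr2cos : rN n ^ 2 * Real.cos (thetaN n) = 1 := by rw [hr2]; field_simp
  have hr1 : 1 ≤ rN n := by
    nlinarith [Real.cos_le_one (thetaN n), hr2cos, hr0, hcosθ]
  have hkθ : (k : ℝ) * thetaN n ≤ Real.pi / 2 - thetaN n / 2 := by
    have h2k : 2 * k + 1 ≤ n := by omega
    have h2k' : 2 * (k : ℝ) + 1 ≤ (n : ℝ) := by exact_mod_cast h2k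
    nlinarith [mul_le_mul_of_nonneg_right (by linarith : 2 * (k : ℝ) ≤ (n : ℝ) - 1) hθpos.le,
      hθn]
  have hkθ0 : 0 ≤ (k : ℝ) * thetaN n := by positivity
  have hc0 : 0 < Real.cos ((k : ℝ) * thetaN n) :=
    Real.cos_pos_of_mem_Ioo ⟨by nlinarith [Real.pi_pos], by nlinarith⟩
  have hsin : Real.sin (thetaN n / 2) ≤ Real.cos ((k : ℝ) * thetaN n) := by
    have := Real.cos_le_cos_of_nonneg_of_le_pi hkθ0
      (by nlinarith [Real.pi_pos]) hkθ
    rwa [Real.cos_pi_div_two_sub] at this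
  have hsin0 : 0 ≤ Real.sin (thetaN n / 2) :=
    Real.sin_nonneg_of_nonneg_of_le_pi (by positivity) (by nlinarith [Real.pi_pos])
  have hsin1 : Real.sin (thetaN n / 2) ≤ 1 := Real.sin_le_one _
  have hhalf : Real.sin (thetaN n / 2) ^ 2 = 1 / 2 - Real.cos (thetaN n) / 2 := by
    have := Real.sin_sq_eq_half_sub (thetaN n / 2)
    rwa [show 2 * (thetaN n / 2) = thetaN n by ring] at this
  have hss : Real.sin (thetaN n / 2) ^ 2 ≤ Real.sin (thetaN n / 2) := by
    rw [pow_two]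
    simpa using mul_le_mul_of_nonneg_left hsin1 hsin0
  have h1c : 1 - Real.cos (thetaN n) ≤ 2 * Real.cos ((k : ℝ) * thetaN n) := by
    linarith
  refine ⟨hr1, hc0, ?_⟩
  nlinarith [mul_le_mul_of_nonneg_left h1c (by positivity : (0:ℝ) ≤ rN n ^ 2)]

/-- bounds for `S₀ = p⟨Q₀⁰, ω⁰⟩ + (1−p)⟨Q₀¹, ω¹⟩` in terms of the first
coordinate `x` of `pω⁰ + (1−p)ω¹`, with attainment when the first coordinates of
`ω⁰, ω¹` are `r_n, −1/r_n` (upper bound) resp. `−1/r_n, r_n` (lower bound). -/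
theorem S0_bounds (n : ℕ) (hodd : Odd n) (hn : 3 < n)
    (k : ℕ) (hke : Even k) (hk : k ≤ (n - 1) / 2)
    (p : ℝ) (hp : p ∈ Set.Icc (0 : ℝ) 1)
    (w0 w1 : Fin 3 → ℝ) (hw0 : w0 ∈ OmegaN n) (hw1 : w1 ∈ OmegaN n) :
    (RN n ^ 2 * rN n * (rN n ^ 2 - 1) * (1 - Real.cos ((k : ℝ) * thetaN n))
          * ((p • w0 + (1 - p) • w1) 0)
        - 2 * RN n ^ 2 * rN n ^ 2 * Real.cos ((k : ℝ) * thetaN n)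
        + 2 * RN n ^ 2 * rN n ^ 2
      ≤ p * dot3 (Q00 n k) w0 + (1 - p) * dot3 (Q01 n k) w1) ∧
    (p * dot3 (Q00 n k) w0 + (1 - p) * dot3 (Q01 n k) w1
      ≤ RN n ^ 2 * rN n * (rN n ^ 2 - 1) * (Real.cos ((k : ℝ) * thetaN n) - 1)
          * ((p • w0 + (1 - p) • w1) 0)
        + 2 * RN n ^ 2 * rN n ^ 2 * Real.cos ((k : ℝ) * thetaN n)
        + RN n ^ 2 * (1 + rN n ^ 4)) ∧
    (w0 0 = rN n ∧ w1 0 = -(1 / rN n) →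
      p * dot3 (Q00 n k) w0 + (1 - p) * dot3 (Q01 n k) w1
        = RN n ^ 2 * rN n * (rN n ^ 2 - 1) * (Real.cos ((k : ℝ) * thetaN n) - 1)
            * ((p • w0 + (1 - p) • w1) 0)
          + 2 * RN n ^ 2 * rN n ^ 2 * Real.cos ((k : ℝ) * thetaN n)
          + RN n ^ 2 * (1 + rN n ^ 4)) ∧
    (w0 0 = -(1 / rN n) ∧ w1 0 = rN n →
      p * dot3 (Q00 n k) w0 + (1 - p) * dot3 (Q01 n k) w1
        = RN n ^ 2 * rN n * (rN n ^ 2 - 1) * (1 - Real.cos ((k : ℝ) * thetaN n))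
            * ((p • w0 + (1 - p) • w1) 0)
          - 2 * RN n ^ 2 * rN n ^ 2 * Real.cos ((k : ℝ) * thetaN n)
          + 2 * RN n ^ 2 * rN n ^ 2) := by
  obtain ⟨hw02, hw0l, hw0u⟩ := omega_coord_bounds n hodd hn hw0
  obtain ⟨hw12, hw1l, hw1u⟩ := omega_coord_bounds n hodd hn hw1
  obtain ⟨hr1, hc0, hkey⟩ := polygon_facts n k hn hk
  have key := S0_scalar_core (rN n) (Real.cos ((k : ℝ) * thetaN n)) p (w0 0) (w1 0)
    (RN n) rfl hr1 hc0.le hkey hp.1 hp.2 hw0u hw0l hw1u hw1l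
  simp only [dot3, Q00, Q01, Fin.sum_univ_three, Matrix.cons_val_zero, Matrix.cons_val_one,
    Matrix.head_cons, Matrix.cons_val_two, Matrix.tail_cons, Pi.add_apply, Pi.smul_apply,
    smul_eq_mul, hw02, hw12, zero_mul, add_zero, mul_one]
  exact key
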